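/- Let A ∈ ℝ^{m×n} and b ∈ ℝ^m with {z ∈ ℝ^n : Az = b} nonempty, let f : ℝ^n → ℝ be continuously differentiable and μ-strongly convex (μ > 0), and set f* = min{f(z) : Az = b}. Let P ∈ ℝ^{n×n} satisfy range(P) = null(A) (equality of subspaces of ℝ^n), and let λ > 0 be such that every nonzero eigenvalue of PᵀP is at least λ. Let σ, ρ > 0, p ∈ [0,1), q > 1, and let g : ℝ^n → ℝ^n satisfy ⟨g(y), y⟩ ≥ σ‖y‖₂^{1+p} + ρ‖y‖₂^{1+q} for all y ∈ ℝ^n. If x : [0,∞) → ℝ^n is differentiable with A·x(0) = b and x′(t) = −P·g(Pᵀ∇f(x(t))) for all t ≥ 0, then A·x(t) = b for all t ≥ 0, and f(x(t)) = f* for all t ≥ T, where T = (1/(μλ))·(1/(σ(1−p)) + 1/(ρ(q−1))). (Proposition 5.) -/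

import Mathlib

open scoped RealInnerProductSpace


lemma mvt_upper {h h' : ℝ → ℝ} {a b K : ℝ} (hab : a ≤ b)
    (hd : ∀ s ∈ Set.Icc a b, HasDerivAt h (h' s) s)
    (hK : ∀ s ∈ Set.Icc a b, h' s ≤ K) : h b ≤ h a + K * (b - a) := by
  have hmono : MonotoneOn (fun t => K * t - h t) (Set.Icc a b) := by
    apply monotoneOn_of_deriv_nonneg (convex_Icc a b)
    · intro s hs
      exact ((continuous_const.mul continuous_id).continuousAt.sub
        (hd s hs).continuousAt).continuousWithinAt
    · intro s hs
      rw [interior_Icc] at hs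
      exact (((hasDerivAt_id s).const_mul K).sub
        (hd s (Set.mem_Icc_of_Ioo hs))).differentiableAt.differentiableWithinAt
    · intro s hs
      rw [interior_Icc] at hs
      have hD : HasDerivAt (fun t => K * t - h t) (K * 1 - h' s) s :=
        ((hasDerivAt_id s).const_mul K).sub (hd s (Set.mem_Icc_of_Ioo hs))
      rw [hD.deriv]
      have := hK s (Set.mem_Icc_of_Ioo hs)
      simp only [mul_one]
      linarith
  have := hmono (Set.left_mem_Icc.2 hab) (Set.right_mem_Icc.2 hab) hab
  simp only at this
  linarith

lemma mvt_lower {h h' : ℝ → ℝ} {a b K : ℝ} (hab : a ≤ b)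
    (hd : ∀ s ∈ Set.Icc a b, HasDerivAt h (h' s) s)
    (hK : ∀ s ∈ Set.Icc a b, K ≤ h' s) : h a + K * (b - a) ≤ h b := by
  have := mvt_upper (h := fun t => -h t) (h' := fun t => -h' t) (K := -K) hab
    (fun s hs => (hd s hs).neg) (fun s hs => neg_le_neg (hK s hs))
  linarith

lemma pow_half_le {r c e : ℝ} (hc : 0 ≤ c) (hr : 0 ≤ r) (he : 0 ≤ e)
    (h : c ≤ r ^ (2:ℕ)) : c ^ (e/2) ≤ r ^ e := by
  have h1 : c ^ (e/2) ≤ (r ^ (2:ℕ)) ^ (e/2) := Real.rpow_le_rpow hc h (by positivity)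
  calc c ^ (e/2) ≤ (r ^ (2:ℕ)) ^ (e/2) := h1
    _ = r ^ e := by
        rw [← Real.rpow_natCast r 2, ← Real.rpow_mul hr]
        congr 1
        ring


lemma spectral_aux {n : ℕ} (P : EuclideanSpace ℝ (Fin n) →L[ℝ] EuclideanSpace ℝ (Fin n))
    (lam : ℝ) (hlam : 0 < lam)
    (heig : ∀ (c : ℝ) (v : EuclideanSpace ℝ (Fin n)), v ≠ 0 → c ≠ 0 →
      (ContinuousLinearMap.adjoint P ∘L P) v = c • v → lam ≤ c)
    (ξ u : EuclideanSpace ℝ (Fin n)) :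
    ⟪ContinuousLinearMap.adjoint P ξ, u⟫ ^ 2 * lam ≤
      ‖ContinuousLinearMap.adjoint P ξ‖ ^ 2 *
        ⟪(ContinuousLinearMap.adjoint P ∘L P) u, u⟫ := by
  classical
  set M := ContinuousLinearMap.adjoint P ∘L P with hM
  have hMapp : ∀ v, M v = ContinuousLinearMap.adjoint P (P v) := fun v => rfl
  have hMsym : LinearMap.IsSymmetric (M : EuclideanSpace ℝ (Fin n) →ₗ[ℝ]
      EuclideanSpace ℝ (Fin n)) := by
    intro a c
    simp only [ContinuousLinearMap.coe_coe, hMapp, ContinuousLinearMap.adjoint_inner_left,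
      ContinuousLinearMap.adjoint_inner_right]
  have hn : Module.finrank ℝ (EuclideanSpace ℝ (Fin n)) = n := finrank_euclideanSpace_fin
  set B := hMsym.eigenvectorBasis hn with hB
  set c := hMsym.eigenvalues hn with hc
  have happ : ∀ i, M (B i) = (c i : ℝ) • B i := fun i => hMsym.apply_eigenvectorBasis hn i
  have hrepr : ∀ v i, B.repr (M v) i = c i * B.repr v i := fun v i =>
    hMsym.eigenvectorBasis_apply_self_apply hn v i
  -- eigenvalues are nonneg
  have hBnorm : ∀ i, ‖B i‖ = 1 := fun i => B.orthonormal.1 i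
  have hcnn : ∀ i, 0 ≤ c i := by
    intro i
    have h1 : ⟪M (B i), B i⟫ = ‖P (B i)‖ ^ 2 := by
      rw [hMapp, ContinuousLinearMap.adjoint_inner_left, real_inner_self_eq_norm_sq]
    have h2 : ⟪M (B i), B i⟫ = c i := by
      rw [happ, real_inner_smul_left, real_inner_self_eq_norm_sq, hBnorm]
      ring
    rw [h2] at h1
    rw [h1]; positivity
  have hclam : ∀ i, c i ≠ 0 → lam ≤ c i := by
    intro i hci
    refine heig (c i) (B i) ?_ hci (happ i)
    intro h0
    have := hBnorm i
    rw [h0] at this; simp at this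
  -- components of adjoint P ξ vanish on the kernel eigendirections
  set w := ContinuousLinearMap.adjoint P ξ with hw
  have hwzero : ∀ i, c i = 0 → B.repr w i = 0 := by
    intro i hci
    have hPB : P (B i) = 0 := by
      have h1 : ⟪M (B i), B i⟫ = ‖P (B i)‖ ^ 2 := by
        rw [hMapp, ContinuousLinearMap.adjoint_inner_left, real_inner_self_eq_norm_sq]
      have h2 : ⟪M (B i), B i⟫ = c i := by
        rw [happ, real_inner_smul_left, real_inner_self_eq_norm_sq, hBnorm]
        ring
      rw [h2, hci] at h1
      have := sq_eq_zero_iff.1 h1.symm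
      exact norm_eq_zero.1 this
    rw [B.repr_apply_apply, hw, ContinuousLinearMap.adjoint_inner_right, hPB]
    simp
  -- pass to coordinates
  set W : Fin n → ℝ := fun i => B.repr w i with hWdef
  set U : Fin n → ℝ := fun i => B.repr u i with hUdef
  have hcoord : ∀ v v' : EuclideanSpace ℝ (Fin n),
      ⟪v, v'⟫ = ∑ i, B.repr v i * B.repr v' i := by
    intro v v'
    rw [← B.sum_inner_mul_inner v v']
    refine Finset.sum_congr rfl fun i _ => ?_
    rw [B.repr_apply_apply, B.repr_apply_apply, real_inner_comm (B i) v]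
  have hinner : ⟪w, u⟫ = ∑ i, W i * U i := hcoord w u
  have hnorm : ‖w‖ ^ 2 = ∑ i, W i ^ 2 := by
    rw [← real_inner_self_eq_norm_sq, hcoord w w]
    refine Finset.sum_congr rfl fun i _ => (sq (W i)).symm
  have hMuu : ⟪M u, u⟫ = ∑ i, c i * U i ^ 2 := by
    rw [hcoord (M u) u]
    refine Finset.sum_congr rfl fun i _ => ?_
    rw [hrepr u i]
    ring
  rw [hinner, hnorm, hMuu]
  -- Cauchy-Schwarz with weights
  set a : Fin n → ℝ := fun i => if c i = 0 then 0 else W i / Real.sqrt (c i) with ha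
  set d : Fin n → ℝ := fun i => Real.sqrt (c i) * U i with hd
  have hWU : ∀ i, W i * U i = a i * d i := by
    intro i
    by_cases hci : c i = 0
    · simp [a, d, hci, hwzero i hci, W]
    · have hcpos : 0 < c i := lt_of_le_of_ne (hcnn i) (Ne.symm hci)
      have hs : Real.sqrt (c i) ≠ 0 := ne_of_gt (Real.sqrt_pos.2 hcpos)
      simp only [a, d, if_neg hci]
      field_simp
  have hCS : (∑ i, a i * d i) ^ 2 ≤ (∑ i, a i ^ 2) * ∑ i, d i ^ 2 :=
    Finset.sum_mul_sq_le_sq_mul_sq Finset.univ a d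
  have hasq : ∀ i, a i ^ 2 * lam ≤ W i ^ 2 := by
    intro i
    by_cases hci : c i = 0
    · simp [a, if_pos hci]; positivity
    · have hcpos : 0 < c i := lt_of_le_of_ne (hcnn i) (Ne.symm hci)
      have hsq : Real.sqrt (c i) ^ 2 = c i := Real.sq_sqrt (hcnn i)
      have hlc : lam ≤ c i := hclam i hci
      simp only [a, if_neg hci, div_pow, hsq]
      rw [div_mul_eq_mul_div, div_le_iff₀ hcpos]
      nlinarith [sq_nonneg (W i)]
  have hdsq : ∀ i, d i ^ 2 = c i * U i ^ 2 := by
    intro i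
    simp only [d, mul_pow, Real.sq_sqrt (hcnn i)]
  have hsum1 : (∑ i, a i ^ 2) * lam ≤ ∑ i, W i ^ 2 := by
    rw [Finset.sum_mul]
    exact Finset.sum_le_sum fun i _ => hasq i
  have hdnn : 0 ≤ ∑ i, d i ^ 2 := Finset.sum_nonneg fun i _ => sq_nonneg _
  calc (∑ i, W i * U i) ^ 2 * lam = (∑ i, a i * d i) ^ 2 * lam := by
        rw [Finset.sum_congr rfl fun i _ => hWU i]
    _ ≤ ((∑ i, a i ^ 2) * ∑ i, d i ^ 2) * lam :=
        mul_le_mul_of_nonneg_right hCS hlam.le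
    _ = ((∑ i, a i ^ 2) * lam) * ∑ i, d i ^ 2 := by ring
    _ ≤ (∑ i, W i ^ 2) * ∑ i, d i ^ 2 := mul_le_mul_of_nonneg_right hsum1 hdnn
    _ = (∑ i, W i ^ 2) * ∑ i, c i * U i ^ 2 := by
        rw [Finset.sum_congr rfl fun i _ => hdsq i]
set_option maxHeartbeats 1000000 in
theorem projected_fxtgf_fixed_time_convergence
    {n m : ℕ}
    (A : EuclideanSpace ℝ (Fin n) →L[ℝ] EuclideanSpace ℝ (Fin m))
    (b : EuclideanSpace ℝ (Fin m)) (hfeas : ∃ z, A z = b)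
    (f : EuclideanSpace ℝ (Fin n) → ℝ) (μ : ℝ) (hμ : 0 < μ)
    (hf : ContDiff ℝ 1 f)
    (hsc : ∀ z w, f z + ⟪gradient f z, w - z⟫ + μ / 2 * ‖w - z‖ ^ 2 ≤ f w)
    (fstar : ℝ) (hatt : ∃ z, A z = b ∧ f z = fstar)
    (hlb : ∀ z, A z = b → fstar ≤ f z)
    (P : EuclideanSpace ℝ (Fin n) →L[ℝ] EuclideanSpace ℝ (Fin n))
    (hP : LinearMap.range (P : EuclideanSpace ℝ (Fin n) →ₗ[ℝ] EuclideanSpace ℝ (Fin n)) = LinearMap.ker (A : EuclideanSpace ℝ (Fin n) →ₗ[ℝ] EuclideanSpace ℝ (Fin m)))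
    (lam : ℝ) (hlam : 0 < lam)
    (heig : ∀ (c : ℝ) (v : EuclideanSpace ℝ (Fin n)), v ≠ 0 → c ≠ 0 →
      (ContinuousLinearMap.adjoint P ∘L P) v = c • v → lam ≤ c)
    (σ ρ p q : ℝ) (hσ : 0 < σ) (hρ : 0 < ρ) (hp : p ∈ Set.Ico (0:ℝ) 1) (hq : 1 < q)
    (g : EuclideanSpace ℝ (Fin n) → EuclideanSpace ℝ (Fin n))
    (hg : ∀ y, σ * ‖y‖ ^ (1 + p) + ρ * ‖y‖ ^ (1 + q) ≤ ⟪g y, y⟫)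
    (x : ℝ → EuclideanSpace ℝ (Fin n)) (hx0 : A (x 0) = b)
    (hx : ∀ t ≥ (0:ℝ),
      HasDerivAt x (-(P (g (ContinuousLinearMap.adjoint P (gradient f (x t)))))) t) :
    (∀ t ≥ (0:ℝ), A (x t) = b) ∧
    (∀ t : ℝ, (1 / (μ * lam)) * (1 / (σ * (1 - p)) + 1 / (ρ * (q - 1))) ≤ t →
      f (x t) = fstar) := by
  obtain ⟨hp0, hp1⟩ := hp
  set y : ℝ → EuclideanSpace ℝ (Fin n) :=
    fun t => ContinuousLinearMap.adjoint P (gradient f (x t)) with hy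
  -- Part 1 : feasibility
  have hker : ∀ v, A (P v) = 0 := by
    intro v
    have hmem : P v ∈ LinearMap.range (P : EuclideanSpace ℝ (Fin n) →ₗ[ℝ]
        EuclideanSpace ℝ (Fin n)) := LinearMap.mem_range.2 ⟨v, rfl⟩
    rw [hP] at hmem
    exact hmem
  have part1 : ∀ t ≥ (0:ℝ), A (x t) = b := by
    intro t ht
    have key : ∀ s ∈ Set.Icc (0:ℝ) t, (fun τ => A (x τ)) s = (fun τ => A (x τ)) 0 := by
      apply constant_of_has_deriv_right_zero
      · intro s hs
        exact (A.hasFDerivAt.comp_hasDerivAt s (hx s hs.1)).continuousAt.continuousWithinAt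
      · intro s hs
        have h1 : HasDerivAt (fun τ => A (x τ)) (A (-(P (g (y s))))) s :=
          A.hasFDerivAt.comp_hasDerivAt s (hx s hs.1)
        have h2 : A (-(P (g (y s)))) = 0 := by rw [map_neg, hker]; simp
        rw [h2] at h1
        exact h1.hasDerivWithinAt
    have := key t (Set.mem_Icc.2 ⟨ht, le_rfl⟩)
    simpa [hx0] using this
  refine ⟨part1, ?_⟩
  -- Lyapunov function
  set V : ℝ → ℝ := fun t => f (x t) - fstar with hV
  have hdiff : ∀ z, HasGradientAt f (gradient f z) z :=
    fun z => ((hf.differentiable one_ne_zero) z).hasGradientAt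
  have hVder : ∀ t ≥ (0:ℝ), HasDerivAt V (-⟪g (y t), y t⟫) t := by
    intro t ht
    have h1 : HasDerivAt (fun τ => f (x τ))
        ((InnerProductSpace.toDual ℝ _ (gradient f (x t))) (-(P (g (y t))))) t :=
      (hdiff (x t)).hasFDerivAt.comp_hasDerivAt t (hx t ht)
    have h2 : (InnerProductSpace.toDual ℝ _ (gradient f (x t))) (-(P (g (y t))))
        = -⟪g (y t), y t⟫ := by
      rw [InnerProductSpace.toDual_apply_apply, inner_neg_right]
      congr 1
      rw [← ContinuousLinearMap.adjoint_inner_left P (g (y t)) (gradient f (x t))]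
      exact real_inner_comm _ _
    rw [h2] at h1
    exact h1.sub_const fstar
  have hVnn : ∀ t ≥ (0:ℝ), 0 ≤ V t := fun t ht => sub_nonneg.2 (hlb _ (part1 t ht))
  -- PL inequality
  have hPL : ∀ t ≥ (0:ℝ), 2 * μ * lam * V t ≤ ‖y t‖ ^ 2 := by
    intro t ht
    obtain ⟨zs, hz1, hz2⟩ := hatt
    have hd : zs - x t ∈ LinearMap.ker (A : EuclideanSpace ℝ (Fin n) →ₗ[ℝ] EuclideanSpace ℝ (Fin m)) := by
      simp [LinearMap.mem_ker, map_sub, hz1, part1 t ht]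
    rw [← hP] at hd
    obtain ⟨u, hu⟩ := hd
    have hsc' := hsc (x t) zs
    rw [hz2, ← (show P u = zs - x t from hu)] at hsc'
    have e1 : ⟪gradient f (x t), P u⟫ = ⟪y t, u⟫ :=
      (ContinuousLinearMap.adjoint_inner_left P u (gradient f (x t))).symm
    set s : ℝ := ⟪(ContinuousLinearMap.adjoint P ∘L P) u, u⟫ with hs
    have e2 : ‖P u‖ ^ 2 = s := by
      rw [hs, ContinuousLinearMap.comp_apply, ContinuousLinearMap.adjoint_inner_left,
        real_inner_self_eq_norm_sq]
    have hsnn : 0 ≤ s := by rw [← e2]; positivity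
    have hspec : ⟪y t, u⟫ ^ 2 * lam ≤ ‖y t‖ ^ 2 * s :=
      spectral_aux P lam hlam heig (gradient f (x t)) u
    rw [e1, e2] at hsc'
    have hVle : V t ≤ -⟪y t, u⟫ - μ/2 * s := by
      have hVt : V t = f (x t) - fstar := rfl
      rw [hVt]; linarith
    set a : ℝ := -⟪y t, u⟫ with ha
    set A1 : ℝ := Real.sqrt lam with hA1def
    set S1 : ℝ := Real.sqrt s with hS1def
    have hA1 : 0 < A1 := Real.sqrt_pos.2 hlam
    have hS1 : 0 ≤ S1 := Real.sqrt_nonneg s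
    have hA2 : A1 ^ 2 = lam := Real.sq_sqrt hlam.le
    have hS2 : S1 ^ 2 = s := Real.sq_sqrt hsnn
    have key : a * A1 ≤ ‖y t‖ * S1 := by
      have h1 : (a * A1) ^ 2 ≤ (‖y t‖ * S1) ^ 2 := by
        have e : (a * A1) ^ 2 = ⟪y t, u⟫ ^ 2 * lam := by
          rw [← hA2, ha]; ring
        have e' : (‖y t‖ * S1) ^ 2 = ‖y t‖ ^ 2 * s := by
          rw [← hS2]; ring
        rw [e, e']
        exact hspec
      have h2 : 0 ≤ ‖y t‖ * S1 := mul_nonneg (norm_nonneg _) hS1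
      exact le_of_pow_le_pow_left₀ two_ne_zero h2 h1
    have hVle' : V t ≤ a - μ/2 * S1 ^ 2 := by rw [hS2]; exact hVle
    have step1 : 2*μ*A1^2*(V t) ≤ 2*μ*A1^2*(a - μ/2 * S1^2) :=
      mul_le_mul_of_nonneg_left hVle' (by positivity)
    have step2 : (2*μ*A1)*(a * A1) ≤ (2*μ*A1)*(‖y t‖ * S1) :=
      mul_le_mul_of_nonneg_left key (by positivity)
    have hsq := sq_nonneg (‖y t‖ - μ*A1*S1)
    clear_value a A1 S1 s V y
    rw [← hA2]
    linarith only [step1, step2, hsq]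
  -- derivative bound
  have hdV : ∀ t ≥ (0:ℝ), -⟪g (y t), y t⟫ ≤
      -(σ * (2*μ*lam*V t) ^ ((1+p)/2)) - ρ * (2*μ*lam*V t) ^ ((1+q)/2) := by
    intro t ht
    have hb : 0 ≤ 2*μ*lam*V t := mul_nonneg (by positivity) (hVnn t ht)
    have h1 : (2*μ*lam*V t) ^ ((1+p)/2) ≤ ‖y t‖ ^ (1+p) :=
      pow_half_le hb (norm_nonneg _) (by linarith) (hPL t ht)
    have h2 : (2*μ*lam*V t) ^ ((1+q)/2) ≤ ‖y t‖ ^ (1+q) :=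
      pow_half_le hb (norm_nonneg _) (by linarith) (hPL t ht)
    have h3 := hg (y t)
    have h4 := mul_le_mul_of_nonneg_left h1 hσ.le
    have h5 := mul_le_mul_of_nonneg_left h2 hρ.le
    linarith
  -- V is nonincreasing on [0, ∞)
  have hanti : AntitoneOn V (Set.Ici (0:ℝ)) := by
    apply antitoneOn_of_deriv_nonpos (convex_Ici 0)
    · intro s hs
      exact (hVder s hs).continuousAt.continuousWithinAt
    · intro s hs
      rw [interior_Ici] at hs
      exact (hVder s hs.le).differentiableAt.differentiableWithinAt
    · intro s hs
      rw [interior_Ici] at hs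
      rw [(hVder s hs.le).deriv]
      have h := hdV s hs.le
      have hb : 0 ≤ 2*μ*lam*V s := mul_nonneg (by positivity) (hVnn s hs.le)
      have n1 : 0 ≤ σ * (2*μ*lam*V s) ^ ((1+p)/2) := mul_nonneg hσ.le (Real.rpow_nonneg hb _)
      have n2 : 0 ≤ ρ * (2*μ*lam*V s) ^ ((1+q)/2) := mul_nonneg hρ.le (Real.rpow_nonneg hb _)
      linarith
  have hq1 : (0:ℝ) < q - 1 := by linarith
  have hp1' : (0:ℝ) < 1 - p := by linarith
  set T1 : ℝ := 1/(μ*lam*ρ*(q-1)) with hT1def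
  set T2 : ℝ := 1/(μ*lam*σ*(1-p)) with hT2def
  have hT1 : 0 < T1 := by
    rw [hT1def]
    exact one_div_pos.2 (mul_pos (mul_pos (mul_pos hμ hlam) hρ) hq1)
  have hT2 : 0 < T2 := by
    rw [hT2def]
    exact one_div_pos.2 (mul_pos (mul_pos (mul_pos hμ hlam) hσ) hp1')
  -- Phase 1
  have claim1 : V T1 ≤ 1/(2*μ*lam) := by
    by_contra hcon
    push_neg at hcon
    have hbig : ∀ s ∈ Set.Icc (0:ℝ) T1, 1 < 2*μ*lam*V s := by
      intro s hs
      have hVs : V T1 ≤ V s := hanti hs.1 (Set.mem_Ici.2 hT1.le) hs.2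
      have h2' : 1/(2*μ*lam) < V s := lt_of_lt_of_le hcon hVs
      calc (1:ℝ) = 2*μ*lam*(1/(2*μ*lam)) := by field_simp
        _ < 2*μ*lam*V s := mul_lt_mul_of_pos_left h2' (by positivity)
    set H : ℝ → ℝ := fun s => (2*μ*lam*V s) ^ ((1-q)/2) with hH
    have hHder : ∀ s ∈ Set.Icc (0:ℝ) T1, HasDerivAt H
        ((fun s => (2*μ*lam*(-⟪g (y s), y s⟫)) * ((1-q)/2)
          * (2*μ*lam*V s) ^ ((1-q)/2 - 1)) s) s := by
      intro s hs
      have hne : 2*μ*lam*V s ≠ 0 := ne_of_gt (by linarith [hbig s hs])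
      exact (HasDerivAt.const_mul (2*μ*lam) (hVder s hs.1)).rpow_const (Or.inl hne)
    have hHlow : ∀ s ∈ Set.Icc (0:ℝ) T1, (q-1)*μ*lam*ρ ≤
        (fun s => (2*μ*lam*(-⟪g (y s), y s⟫)) * ((1-q)/2)
          * (2*μ*lam*V s) ^ ((1-q)/2 - 1)) s := by
      intro s hs
      simp only
      set cc : ℝ := 2*μ*lam*V s with hcc
      have hc1 : 1 < cc := hbig s hs
      have hc0 : 0 < cc := by linarith
      have hVle : -⟪g (y s), y s⟫ ≤ -(ρ * cc ^ ((1+q)/2)) := by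
        have h := hdV s hs.1
        have n1 : 0 ≤ σ * cc ^ ((1+p)/2) := mul_nonneg hσ.le (Real.rpow_nonneg hc0.le _)
        linarith
      have hcoef : ((1-q)/2) * cc ^ ((1-q)/2 - 1) ≤ 0 :=
        mul_nonpos_of_nonpos_of_nonneg (by linarith) (Real.rpow_nonneg hc0.le _)
      have hstep : 2*μ*lam*(-⟪g (y s), y s⟫) ≤ 2*μ*lam*(-(ρ * cc ^ ((1+q)/2))) :=
        mul_le_mul_of_nonneg_left hVle (by positivity)
      have hmul := mul_le_mul_of_nonpos_right hstep hcoef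
      have hexp : cc ^ ((1+q)/2) * cc ^ ((1-q)/2 - 1) = 1 := by
        rw [← Real.rpow_add hc0]
        have hz0 : (1+q)/2 + ((1-q)/2 - 1) = 0 := by ring
        rw [hz0, Real.rpow_zero]
      have hrw : (2*μ*lam*(-(ρ * cc ^ ((1+q)/2)))) * (((1-q)/2) * cc ^ ((1-q)/2 - 1))
          = (q-1)*μ*lam*ρ * (cc ^ ((1+q)/2) * cc ^ ((1-q)/2 - 1)) := by ring
      rw [hrw, hexp, mul_one] at hmul
      calc (q-1)*μ*lam*ρ ≤ (2*μ*lam*(-⟪g (y s), y s⟫)) * (((1-q)/2) * cc ^ ((1-q)/2 - 1)) :=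
            hmul
        _ = (2*μ*lam*(-⟪g (y s), y s⟫)) * ((1-q)/2) * cc ^ ((1-q)/2 - 1) := by ring
    have hKT := mvt_lower hT1.le hHder hHlow
    have hprod : ((q-1)*μ*lam*ρ) * (T1 - 0) = 1 := by
      rw [hT1def]
      field_simp
      ring
    have hH0 : 0 < H 0 :=
      Real.rpow_pos_of_pos (by linarith [hbig 0 ⟨le_rfl, hT1.le⟩]) _
    have hHT1 : H T1 < 1 :=
      Real.rpow_lt_one_of_one_lt_of_neg (hbig T1 ⟨hT1.le, le_rfl⟩) (by linarith)
    rw [hprod] at hKT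
    linarith
  -- Phase 2
  have claim2 : V (T1 + T2) ≤ 0 := by
    by_contra hcon
    push_neg at hcon
    have hpos : ∀ s ∈ Set.Icc T1 (T1+T2), 0 < V s := by
      intro s hs
      have h0s : (0:ℝ) ≤ s := le_trans hT1.le hs.1
      have := hanti (Set.mem_Ici.2 h0s) (Set.mem_Ici.2 (by linarith : (0:ℝ) ≤ T1+T2)) hs.2
      linarith
    set K : ℝ → ℝ := fun s => (2*μ*lam*V s) ^ ((1-p)/2) with hK
    have hKder : ∀ s ∈ Set.Icc T1 (T1+T2), HasDerivAt K
        ((fun s => (2*μ*lam*(-⟪g (y s), y s⟫)) * ((1-p)/2)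
          * (2*μ*lam*V s) ^ ((1-p)/2 - 1)) s) s := by
      intro s hs
      have hne : 2*μ*lam*V s ≠ 0 :=
        ne_of_gt (mul_pos (by positivity) (hpos s hs))
      exact (HasDerivAt.const_mul (2*μ*lam) (hVder s (le_trans hT1.le hs.1))).rpow_const
        (Or.inl hne)
    have hKup : ∀ s ∈ Set.Icc T1 (T1+T2),
        (fun s => (2*μ*lam*(-⟪g (y s), y s⟫)) * ((1-p)/2)
          * (2*μ*lam*V s) ^ ((1-p)/2 - 1)) s ≤ -((1-p)*μ*lam*σ) := by
      intro s hs
      simp only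
      set cc : ℝ := 2*μ*lam*V s with hcc
      have hc0 : 0 < cc := mul_pos (by positivity) (hpos s hs)
      have hVle : -⟪g (y s), y s⟫ ≤ -(σ * cc ^ ((1+p)/2)) := by
        have h := hdV s (le_trans hT1.le hs.1)
        have n2 : 0 ≤ ρ * cc ^ ((1+q)/2) := mul_nonneg hρ.le (Real.rpow_nonneg hc0.le _)
        linarith
      have hcoef : 0 ≤ ((1-p)/2) * cc ^ ((1-p)/2 - 1) :=
        mul_nonneg (by linarith) (Real.rpow_nonneg hc0.le _)
      have hstep : 2*μ*lam*(-⟪g (y s), y s⟫) ≤ 2*μ*lam*(-(σ * cc ^ ((1+p)/2))) :=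
        mul_le_mul_of_nonneg_left hVle (by positivity)
      have hmul := mul_le_mul_of_nonneg_right hstep hcoef
      have hexp : cc ^ ((1+p)/2) * cc ^ ((1-p)/2 - 1) = 1 := by
        rw [← Real.rpow_add hc0]
        have hz0 : (1+p)/2 + ((1-p)/2 - 1) = 0 := by ring
        rw [hz0, Real.rpow_zero]
      have hrw : (2*μ*lam*(-(σ * cc ^ ((1+p)/2)))) * (((1-p)/2) * cc ^ ((1-p)/2 - 1))
          = -((1-p)*μ*lam*σ) * (cc ^ ((1+p)/2) * cc ^ ((1-p)/2 - 1)) := by ring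
      rw [hrw, hexp, mul_one] at hmul
      calc (2*μ*lam*(-⟪g (y s), y s⟫)) * ((1-p)/2) * cc ^ ((1-p)/2 - 1)
          = (2*μ*lam*(-⟪g (y s), y s⟫)) * (((1-p)/2) * cc ^ ((1-p)/2 - 1)) := by ring
        _ ≤ -((1-p)*μ*lam*σ) := hmul
    have hKT := mvt_upper (by linarith : T1 ≤ T1 + T2) hKder hKup
    have hprod : -((1-p)*μ*lam*σ) * (T1 + T2 - T1) = -1 := by
      rw [hT2def]
      field_simp
      ring
    have hb1 : 2*μ*lam*V T1 ≤ 1 := by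
      calc 2*μ*lam*V T1 ≤ 2*μ*lam*(1/(2*μ*lam)) :=
            mul_le_mul_of_nonneg_left claim1 (by positivity)
        _ = 1 := by field_simp
    have hb0 : 0 ≤ 2*μ*lam*V T1 := mul_nonneg (by positivity) (hVnn T1 hT1.le)
    have hKT1 : K T1 ≤ 1 := Real.rpow_le_one hb0 hb1 (by linarith)
    have hKend : 0 < K (T1+T2) :=
      Real.rpow_pos_of_pos (mul_pos (by positivity) hcon) _
    rw [hprod] at hKT
    linarith
  -- conclusion
  intro t hTt
  have hTsum : (1 / (μ * lam)) * (1 / (σ * (1 - p)) + 1 / (ρ * (q - 1))) = T1 + T2 := by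
    rw [hT1def, hT2def]
    field_simp
    ring
  rw [hTsum] at hTt
  have ht0 : (0:ℝ) ≤ T1 + T2 := by linarith
  have ht0' : (0:ℝ) ≤ t := le_trans ht0 hTt
  have h1 : V t ≤ V (T1+T2) := hanti (Set.mem_Ici.2 ht0) (Set.mem_Ici.2 ht0') hTt
  have h2 : 0 ≤ V t := hVnn t ht0'
  have hz : V t = 0 := le_antisymm (le_trans h1 claim2) h2
  have hfx : f (x t) - fstar = 0 := hz
  linarith
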